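/- Let p, q, r ∈ Δ^K with q(i) > 0 and r(i) > 0 for all i ∈ [K], and let V ≥ 1 satisfy r(i)/q(i) ≤ V for all i ∈ [K]. Then ∑_{i=1}^K p(i)·( log(r(i)/q(i)) )² ≤ (2 + log V)·( ∑_{i=1}^K p(i)·log(r(i)/q(i)) + ∑_{i=1}^K p(i)·q(i)/r(i) − 1 ). -/

import Mathlib

open scoped ENNReal
open MeasureTheory

/-- The probability simplex on `Fin K`. -/
def simplex (K : ℕ) : Set (Fin K → ℝ) :=
  {p | (∀ i, 0 ≤ p i) ∧ ∑ i, p i = 1}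

/-- Kullback–Leibler divergence between two vectors on `Fin K`, with the
conventions `0 · log 0 = 0` and value `∞` if `p i > 0 = q i` for some `i`. -/
noncomputable def klD {K : ℕ} (p q : Fin K → ℝ) : ℝ≥0∞ :=
  if ∀ i, 0 < p i → 0 < q i then ENNReal.ofReal (∑ i, p i * Real.log (p i / q i)) else ⊤

/-- The law of `n` i.i.d. samples from the distribution `p` on `Fin K`. -/
noncomputable def iidMeasure (n K : ℕ) (p : Fin K → ℝ) : Measure (Fin n → Fin K) :=
  ∑ x : Fin n → Fin K, (∏ t, ENNReal.ofReal (p (x t))) • Measure.dirac x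

/-- `countTo x t i` is the number of indices `s` among the first `t` samples with `x s = i`. -/
def countTo {n K : ℕ} (x : Fin n → Fin K) (t : ℕ) (i : Fin K) : ℕ :=
  (Finset.univ.filter (fun s : Fin n => (s : ℕ) < t ∧ x s = i)).card

private lemma yb_pade (s : ℝ) (hs : 0 ≤ s) : 2 - s ≤ (2 + s) * Real.exp (-s) := by
  have key : Monotone (fun s : ℝ => (2 + s) * Real.exp (-s) + s) := by
    apply monotone_of_hasDerivAt_nonneg (f' := fun s => 1 - (1 + s) * Real.exp (-s))
    · intro x
      have h1 : HasDerivAt (fun s : ℝ => -s) (-1) x := (hasDerivAt_id x).neg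
      have h2 : HasDerivAt (fun s : ℝ => Real.exp (-s)) (Real.exp (-x) * (-1)) x :=
        (Real.hasDerivAt_exp (-x)).comp x h1
      have h3 : HasDerivAt (fun s : ℝ => (2 + s)) 1 x := by
        simpa using (hasDerivAt_id x).const_add 2
      have h4 := (h3.mul h2).add (hasDerivAt_id x)
      refine h4.congr_deriv ?_
      beta_reduce
      ring
    · intro x
      simp only [Pi.zero_apply, sub_nonneg]
      have h5 : 1 + x ≤ Real.exp x := by linarith [Real.add_one_le_exp x]
      calc (1 + x) * Real.exp (-x) ≤ Real.exp x * Real.exp (-x) := by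
            apply mul_le_mul_of_nonneg_right h5 (Real.exp_nonneg _)
        _ = 1 := by rw [← Real.exp_add]; simp
  have := key hs
  simp only [neg_zero, Real.exp_zero, mul_one, add_zero] at this
  linarith

private lemma yb_quad (u : ℝ) (hu : 0 ≤ u) : u ^ 2 ≤ 2 * (Real.exp u - 1 - u) := by
  have key : Monotone (fun u : ℝ => 2 * (Real.exp u - 1 - u) - u ^ 2) := by
    apply monotone_of_hasDerivAt_nonneg (f' := fun u => 2 * (Real.exp u - 1 - u))
    · intro x
      have h2 : HasDerivAt (fun u : ℝ => Real.exp u) (Real.exp x) x := Real.hasDerivAt_exp x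
      have h3 : HasDerivAt (fun u : ℝ => 2 * (Real.exp u - 1 - u))
          (2 * (Real.exp x - 1)) x :=
        (((h2.sub_const 1).sub (hasDerivAt_id x)).const_mul 2)
      have h4 : HasDerivAt (fun u : ℝ => u ^ 2) (2 * x) x := by
        simpa [mul_comm] using (hasDerivAt_pow 2 x)
      have h5 := h3.sub h4
      refine h5.congr_deriv ?_
      beta_reduce
      ring
    · intro x
      have : 1 + x ≤ Real.exp x := by linarith [Real.add_one_le_exp x]
      simp only [Pi.zero_apply]
      nlinarith
  have := key hu
  simp only [Real.exp_zero] at this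
  nlinarith

private lemma yb_pointwise (t L : ℝ) (hL : 0 ≤ L) (htL : t ≤ L) :
    t ^ 2 ≤ (2 + L) * (t + Real.exp (-t) - 1) := by
  have hA : 0 ≤ t + Real.exp (-t) - 1 := by
    have := Real.add_one_le_exp (-t); linarith
  rcases le_or_gt t 0 with ht | ht
  · have h := yb_quad (-t) (by linarith)
    have : t ^ 2 ≤ 2 * (t + Real.exp (-t) - 1) := by nlinarith
    nlinarith
  · have h := yb_pade t ht.le
    have h2 : t ^ 2 ≤ (2 + t) * (t + Real.exp (-t) - 1) := by nlinarith
    nlinarith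

/-- generalized Yang–Barron inequality. -/
theorem generalized_yang_barron (K : ℕ) (hK : 2 ≤ K) (p q r : Fin K → ℝ)
    (hp : p ∈ simplex K) (hq : q ∈ simplex K) (hr : r ∈ simplex K)
    (hqpos : ∀ i, 0 < q i) (hrpos : ∀ i, 0 < r i)
    (V : ℝ) (hV : 1 ≤ V) (hVr : ∀ i, r i / q i ≤ V) :
    ∑ i, p i * (Real.log (r i / q i)) ^ 2 ≤
      (2 + Real.log V) *
        (∑ i, p i * Real.log (r i / q i) + ∑ i, p i * (q i / r i) - 1) := by
  have hL0 : 0 ≤ Real.log V := Real.log_nonneg hV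
  have key : ∀ i, p i * (Real.log (r i / q i)) ^ 2 ≤
      p i * ((2 + Real.log V) * (Real.log (r i / q i) + q i / r i - 1)) := by
    intro i
    have hx : 0 < r i / q i := div_pos (hrpos i) (hqpos i)
    have ht : Real.log (r i / q i) ≤ Real.log V := Real.log_le_log hx (hVr i)
    have hexp : Real.exp (-(Real.log (r i / q i))) = q i / r i := by
      rw [← Real.log_inv, Real.exp_log (by positivity)]
      rw [inv_div]
    have := yb_pointwise (Real.log (r i / q i)) (Real.log V) hL0 ht
    rw [hexp] at this
    exact mul_le_mul_of_nonneg_left this (hp.1 i)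
  calc ∑ i, p i * (Real.log (r i / q i)) ^ 2
      ≤ ∑ i, p i * ((2 + Real.log V) * (Real.log (r i / q i) + q i / r i - 1)) :=
        Finset.sum_le_sum fun i _ => key i
    _ = (2 + Real.log V) * (∑ i, (p i * Real.log (r i / q i) + p i * (q i / r i) - p i)) := by
        rw [Finset.mul_sum]
        exact Finset.sum_congr rfl fun i _ => by ring
    _ = (2 + Real.log V) *
        (∑ i, p i * Real.log (r i / q i) + ∑ i, p i * (q i / r i) - 1) := by
        rw [Finset.sum_sub_distrib, Finset.sum_add_distrib, hp.2]
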